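/- The map sending λ_{n,s} to (n,s) is an injective monoid homomorphism from the monoid of endomorphisms {λ_{n,s} : n ≥ 1, 0 ≤ s < n} of C₊ (under composition) into the semidirect product (ℕ₊, ·) ⋉_φ (ℕ, +), where the multiplication is (n₁,s₁)·(n₂,s₂) = (n₁n₂, s₁n₂ + s₂). -/
import Mathlib


def bmul (x y : ℕ × ℕ) : ℕ × ℕ :=
  (x.1 + y.1 - min x.2 y.1, x.2 + y.2 - min x.2 y.1)

abbrev Cplus := {x : ℕ × ℕ // x.1 ≤ x.2}

instance : Mul Cplus :=
  ⟨fun x y => ⟨bmul x.1 y.1, by have hx := x.2; have hy := y.2; simp only [bmul]; omega⟩⟩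

instance : One Cplus := ⟨⟨(0, 0), le_refl 0⟩⟩

theorem Cplus.mul_def (x y : Cplus) : (x * y).1 = bmul x.1 y.1 := rfl

theorem Cplus.one_def : (1 : Cplus).1 = (0, 0) := rfl

instance : Monoid Cplus where
  mul_assoc x y z := Subtype.ext (by
    simp only [Cplus.mul_def, bmul, Prod.ext_iff]; omega)
  one_mul x := Subtype.ext (by
    have := x.2
    simp only [Cplus.mul_def, Cplus.one_def, bmul, Prod.ext_iff]; omega)
  mul_one x := Subtype.ext (by
    have := x.2
    simp only [Cplus.mul_def, Cplus.one_def, bmul, Prod.ext_iff]; omega)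

def lam (k : ℕ) : Cplus → Cplus :=
  fun x => ⟨(k * x.1.1, k * x.1.2), Nat.mul_le_mul_left k x.2⟩

def sig (l m : ℕ) : Cplus → Cplus := fun x =>
  if x.1.1 = x.1.2 then 1 else ⟨(l, l + m * (x.1.2 - x.1.1)), by omega⟩

def lamns (n s : ℕ) : Cplus → Cplus := fun x =>
  if x.1.1 = 0 then ⟨(0, n * x.1.2), Nat.zero_le _⟩
  else ⟨(n * x.1.1 - s, n * x.1.2 - s), by
    have := Nat.mul_le_mul_left n x.2; omega⟩

def vsig : Cplus → Cplus := fun x =>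
  if x.1 = (0, 0) then 1 else ⟨(x.1.1 + 1, x.1.2 + 1), by have := x.2; omega⟩

def bpow (x : ℕ × ℕ) : ℕ → ℕ × ℕ
  | 0 => (0, 0)
  | n + 1 => bmul (bpow x n) x

/-- λ_{n,s} ↦ (n,s) is an injective monoid homomorphism from the monoid
{λ_{n,s} : n ≥ 1, 0 ≤ s < n} under composition into the semidirect product
(ℕ₊,·) ⋉ (ℕ,+) with product (n₁,s₁)·(n₂,s₂) = (n₁n₂, s₁n₂+s₂). -/
theorem lamns_into_semidirect :
    lamns 1 0 = id ∧
    ∀ n₁ s₁ n₂ s₂ : ℕ, 1 ≤ n₁ → s₁ < n₁ → 1 ≤ n₂ → s₂ < n₂ →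
      (lamns n₁ s₁ = lamns n₂ s₂ → n₁ = n₂ ∧ s₁ = s₂) ∧
      lamns n₂ s₂ ∘ lamns n₁ s₁ = lamns (n₁ * n₂) (s₁ * n₂ + s₂) := by
  refine ⟨?_, fun n₁ s₁ n₂ s₂ h1 h2 h3 h4 => ⟨fun heq => ?_, ?_⟩⟩
  · funext x
    obtain ⟨⟨i, j⟩, h⟩ := x
    simp only [lamns, id]
    split <;> exact Subtype.ext (by simp_all)
  · have e1 := congrFun heq ⟨(0, 1), by omega⟩
    have e2 := congrFun heq ⟨(1, 1), le_refl 1⟩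
    simp only [lamns] at e1 e2
    rw [Subtype.ext_iff, Prod.ext_iff] at e1 e2
    simp at e1 e2
    omega
  · funext x
    obtain ⟨⟨i, j⟩, h⟩ := x
    simp only [Function.comp, lamns]
    rcases Nat.eq_zero_or_pos i with hi | hi
    · subst hi
      simp only [if_pos rfl]
      exact Subtype.ext (by simp; ring)
    · have hne : ¬ i = 0 := by omega
      have h1' : ¬ n₁ * i - s₁ = 0 := by
        have : n₁ ≤ n₁ * i := Nat.le_mul_of_pos_right n₁ hi
        have hc : s₁ * n₂ = n₂ * s₁ := Nat.mul_comm _ _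
        omega
      simp only [if_neg hne, if_neg h1']
      have hii : n₁ ≤ n₁ * i := Nat.le_mul_of_pos_right n₁ hi
      have hjj : n₁ ≤ n₁ * j := Nat.le_mul_of_pos_right n₁ (by omega)
      refine Subtype.ext (Prod.ext ?_ ?_) <;> simp only
      · have ha := Nat.mul_sub n₂ (n₁ * i) s₁
        have hb : n₂ * (n₁ * i) = n₁ * n₂ * i := by ring
        have hc : s₁ * n₂ = n₂ * s₁ := Nat.mul_comm _ _
        omega
      · have ha := Nat.mul_sub n₂ (n₁ * j) s₁
        have hb : n₂ * (n₁ * j) = n₁ * n₂ * j := by ring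
        have hc : s₁ * n₂ = n₂ * s₁ := Nat.mul_comm _ _
        omega
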